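/- Let m_sc(z) denote the Stieltjes transform of the semicircle law and z = E + iη with η > 0 and κ = min{|E-2|, |E+2|}. Then there exist universal constants c, C > 0 such that c·sqrt(κ + η) ≤ |1 - m_sc(z)^2| ≤ C·sqrt(κ + η) for all z with |E| ≤ 3, 0 < η ≤ 1. -/

import Mathlib

private lemma sqrt_le_of_sq' (x c : ℝ) (hc : 0 ≤ c) (h : x ≤ c^2) : Real.sqrt x ≤ c := by
  calc Real.sqrt x ≤ Real.sqrt (c^2) := Real.sqrt_le_sqrt h
  _ = c := Real.sqrt_sq hc

private lemma aux_prod (a b η : ℝ) (hη : 0 < η) (hη1 : η ≤ 1)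
    (ha5 : |a| ≤ 5) (hb2 : 2 ≤ |b|) (hb5 : |b| ≤ 5) :
    |a| + η ≤ Real.sqrt (a^2+η^2) * Real.sqrt (b^2+η^2) ∧
    Real.sqrt (a^2+η^2) * Real.sqrt (b^2+η^2) ≤ 9*(|a| + η) := by
  have hsa := sq_abs a
  have hsb := sq_abs b
  have hS1l : (|a|+η)/2 ≤ Real.sqrt (a^2+η^2) := by
    rw [Real.le_sqrt (by positivity) (by positivity)]
    nlinarith [sq_nonneg (|a| - η)]
  have hS1u : Real.sqrt (a^2+η^2) ≤ |a| + η := by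
    apply sqrt_le_of_sq' _ _ (by positivity)
    nlinarith [abs_nonneg a]
  have hS2l : (2:ℝ) ≤ Real.sqrt (b^2+η^2) := by
    rw [Real.le_sqrt (by norm_num) (by positivity)]
    nlinarith
  have hS2u : Real.sqrt (b^2+η^2) ≤ 6 := by
    apply sqrt_le_of_sq' _ _ (by norm_num)
    nlinarith
  constructor
  · calc |a| + η = ((|a|+η)/2) * 2 := by ring
      _ ≤ Real.sqrt (a^2+η^2) * Real.sqrt (b^2+η^2) :=
        mul_le_mul hS1l hS2l (by norm_num) (Real.sqrt_nonneg _)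
  · calc Real.sqrt (a^2+η^2) * Real.sqrt (b^2+η^2) ≤ (|a|+η) * 6 :=
        mul_le_mul hS1u hS2u (Real.sqrt_nonneg _) (by positivity)
      _ ≤ 9*(|a|+η) := by nlinarith [abs_nonneg a]

/-- Square-root behavior of `1 - m_sc(z)²` near the spectral edges: there are universal
constants `c, C > 0` such that for all `z = E + iη` with `|E| ≤ 3`, `0 < η ≤ 1`, and
`m_sc(z)` the unique solution of `m² + z·m + 1 = 0` with `Im m > 0`,
`c·√(κ+η) ≤ |1 - m_sc(z)²| ≤ C·√(κ+η)` where `κ = min{|E-2|, |E+2|}`. -/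
theorem one_sub_msc_sq_comparable : ∃ c C : ℝ, 0 < c ∧ 0 < C ∧
    ∀ E η : ℝ, |E| ≤ 3 → 0 < η → η ≤ 1 →
    ∀ m : ℂ, m ^ 2 + (E + η * Complex.I) * m + 1 = 0 → 0 < m.im →
      c * Real.sqrt (min |E - 2| |E + 2| + η) ≤ ‖1 - m ^ 2‖ ∧
      ‖1 - m ^ 2‖ ≤ C * Real.sqrt (min |E - 2| |E + 2| + η) := by
  refine ⟨1/5, 3, by norm_num, by norm_num, ?_⟩
  intro E η hE hη hη1 m hm him
  set z : ℂ := (E:ℂ) + (η:ℝ) * Complex.I with hz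
  have hE3 : -3 ≤ E ∧ E ≤ 3 := abs_le.1 hE
  -- m ≠ 0
  have hm0 : m ≠ 0 := by
    intro h; rw [h] at hm; norm_num at hm
  have hq : 0 < Complex.normSq m := Complex.normSq_pos.2 hm0
  -- |m| ≤ 1
  have hinv : m + z + m⁻¹ = 0 := by
    field_simp
    linear_combination hm
  have him0 := congrArg Complex.im hinv
  simp [Complex.add_im, Complex.inv_im, hz] at him0
  have hq1 : Complex.normSq m < 1 := by
    have h4 : (m.im + η) * Complex.normSq m = m.im := by
      field_simp at him0
      linarith
    nlinarith
  have hau : ‖m‖ ≤ 1 := by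
    have h5 : ‖m‖ ^2 ≤ 1 := by rw [Complex.sq_norm]; linarith
    nlinarith [norm_nonneg m]
  -- |z| ≤ 4
  have hz4 : ‖z‖ ≤ 4 := by
    rw [hz, Complex.norm_add_mul_I]
    apply sqrt_le_of_sq' _ _ (by norm_num)
    nlinarith [sq_abs E]
  -- 1/5 ≤ |m|
  have hsum : ‖m^2 + z*m‖ = 1 := by
    have h6 : m^2 + z*m = -1 := by linear_combination hm
    rw [h6]; simp
  have hal : 1/5 ≤ ‖m‖ := by
    have h7 := norm_add_le (m^2) (z*m)
    rw [hsum, norm_pow, norm_mul] at h7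
    nlinarith [norm_nonneg m, norm_nonneg z]
  -- key identity
  have hkey : (1 - m^2)^2 = (z^2 - 4) * m^2 := by
    linear_combination (m^2 - z*m + 1) * hm
  have habsk : ‖1 - m^2‖ ^ 2
      = ‖z-2‖ * ‖z+2‖ * ‖m‖ ^2 := by
    have h2 : ‖(1-m^2)^2‖ = ‖(z-2)*((z+2)*m^2)‖ := by
      rw [hkey]; ring_nf
    simpa [norm_mul, norm_pow, mul_assoc] using h2
  have e1 : ‖z - 2‖ = Real.sqrt ((E-2)^2 + η^2) := by
    have : z - 2 = ((E - 2 : ℝ) : ℂ) + (η:ℝ) * Complex.I := by rw [hz]; push_cast; ring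
    rw [this, Complex.norm_add_mul_I]
  have e2 : ‖z + 2‖ = Real.sqrt ((E+2)^2 + η^2) := by
    have : z + 2 = ((E + 2 : ℝ) : ℂ) + (η:ℝ) * Complex.I := by rw [hz]; push_cast; ring
    rw [this, Complex.norm_add_mul_I]
  set κ := min |E - 2| |E + 2| with hκ
  have hs0 : 0 < κ + η := by
    have : 0 ≤ κ := le_min (abs_nonneg _) (abs_nonneg _)
    linarith
  -- product bounds
  have hPbound : κ + η ≤ ‖z-2‖ * ‖z+2‖ ∧
      ‖z-2‖ * ‖z+2‖ ≤ 9 * (κ + η) := by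
    rw [e1, e2]
    rcases le_total 0 E with hEpos | hEneg
    · have hmin : κ = |E - 2| := by
        rw [hκ]
        apply min_eq_left
        rw [abs_of_nonneg (by linarith : (0:ℝ) ≤ E + 2)]
        rw [abs_le]; constructor <;> linarith
      rw [hmin]
      exact aux_prod (E-2) (E+2) η hη hη1
        (by rw [abs_le]; constructor <;> linarith)
        (by rw [abs_of_nonneg (by linarith : (0:ℝ) ≤ E + 2)]; linarith)
        (by rw [abs_le]; constructor <;> linarith)
    · have hmin : κ = |E + 2| := by
        rw [hκ]
        apply min_eq_right
        rw [abs_of_nonpos (by linarith : E - 2 ≤ 0)]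
        rw [abs_le]; constructor <;> linarith
      rw [hmin, mul_comm]
      exact aux_prod (E+2) (E-2) η hη hη1
        (by rw [abs_le]; constructor <;> linarith)
        (by rw [abs_of_nonpos (by linarith : E - 2 ≤ 0)]; linarith)
        (by rw [abs_le]; constructor <;> linarith)
  obtain ⟨hPl, hPu⟩ := hPbound
  have hA0 : 0 ≤ ‖1 - m^2‖ := norm_nonneg _
  have hsq : Real.sqrt (κ + η) ^ 2 = κ + η := Real.sq_sqrt hs0.le
  constructor
  · have h5 : (1/5 * Real.sqrt (κ + η))^2 ≤ ‖1 - m^2‖ ^ 2 := by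
      rw [mul_pow, hsq, habsk]
      have ha2 : 1/25 ≤ ‖m‖ ^ 2 := by nlinarith [norm_nonneg m]
      have hP0 : 0 ≤ ‖z-2‖ * ‖z+2‖ :=
        mul_nonneg (norm_nonneg _) (norm_nonneg _)
      calc (1/5:ℝ)^2 * (κ + η) = (κ + η) * (1/25) := by ring
        _ ≤ ‖z-2‖ * ‖z+2‖ * ‖m‖ ^ 2 :=
          mul_le_mul hPl ha2 (by norm_num) hP0
    calc (1/5 : ℝ) * Real.sqrt (κ + η)
        = Real.sqrt ((1/5 * Real.sqrt (κ + η))^2) := (Real.sqrt_sq (by positivity)).symm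
      _ ≤ Real.sqrt (‖1 - m^2‖ ^ 2) := Real.sqrt_le_sqrt h5
      _ = ‖1 - m^2‖ := Real.sqrt_sq hA0
  · have h5 : ‖1 - m^2‖ ^ 2 ≤ (3 * Real.sqrt (κ + η))^2 := by
      rw [mul_pow, hsq, habsk]
      have ha2 : ‖m‖ ^ 2 ≤ 1 := by nlinarith [norm_nonneg m]
      calc ‖z-2‖ * ‖z+2‖ * ‖m‖ ^ 2
          ≤ (9 * (κ + η)) * 1 := mul_le_mul hPu ha2 (sq_nonneg _) (by linarith)
        _ = (3:ℝ)^2 * (κ + η) := by ring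
    calc ‖1 - m^2‖
        = Real.sqrt (‖1 - m^2‖ ^ 2) := (Real.sqrt_sq hA0).symm
      _ ≤ Real.sqrt ((3 * Real.sqrt (κ + η))^2) := Real.sqrt_le_sqrt h5
      _ = 3 * Real.sqrt (κ + η) := Real.sqrt_sq (by positivity)
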